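/- Let C be a linear [n,k] code over F_q satisfying the chain condition, with generalized Hamming weight hierarchy d_1 < d_2 < ... < d_k (and d_0 = 0), and let t ≥ 1 be an integer. Then the t-th generalized covering radius satisfies R_t(C) ≤ n − Σ_{r=1}^{k} ⌈(d_r − d_{r−1})/q^t⌉. Equivalently, for every collection of vectors v_1, ..., v_t ∈ F_q^n there exist codewords c_1, ..., c_t ∈ C and a set I ⊆ {1,...,n} with |I| ≤ n − Σ_{r=1}^{k} ⌈(d_r − d_{r−1})/q^t⌉ such that supp(v_i − c_i) ⊆ I for every i ∈ {1,...,t}. -/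

import Mathlib

open Finset

section Aux
variable {F : Type*} [Field F] [Fintype F]

lemma pigeonAux {q n t : ℕ} (hq : Fintype.card F = q)
    (T : Finset (Fin n)) (g : Fin n → F) (hg : ∀ j ∈ T, g j ≠ 0)
    (w : Fin t → Fin n → F) :
    ∃ b : Fin t → F, ∃ Z : Finset (Fin n), Z ⊆ T ∧
      (T.card + q ^ t - 1) / q ^ t ≤ Z.card ∧ ∀ i, ∀ j ∈ Z, w i j = b i * g j := by
  classical
  have hQcard : Fintype.card (Fin t → F) = q ^ t := by
    simp [hq]
  have hQpos : 0 < q ^ t := by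
    rw [← hQcard]; exact Fintype.card_pos
  rcases Nat.eq_zero_or_pos T.card with h0 | hpos
  · refine ⟨0, ∅, Finset.empty_subset _, ?_, by simp⟩
    have : (0 + q ^ t - 1) / q ^ t = 0 := Nat.div_eq_of_lt (by omega)
    rw [h0, this]
    simp
  · set Q := q ^ t with hQ
    set m := T.card with hm
    set N := (m + Q - 1) / Q with hN
    have hN1 : 1 ≤ N := by
      rw [hN]
      rw [Nat.one_le_div_iff hQpos]
      omega
    have h1 : Q * N ≤ m + Q - 1 := by
      rw [mul_comm]; exact Nat.div_mul_le_self _ _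
    have h2 : Q * (N - 1) = Q * N - Q := by
      rw [Nat.mul_sub, mul_one]
    have hlt : (Finset.univ : Finset (Fin t → F)).card * (N - 1) < m := by
      rw [Finset.card_univ, hQcard, h2]
      omega
    obtain ⟨b, -, hb⟩ := Finset.exists_lt_card_fiber_of_mul_lt_card_of_maps_to
      (f := fun j => fun i => w i j * (g j)⁻¹) (fun a _ => Finset.mem_univ _) hlt
    refine ⟨b, T.filter (fun j => (fun i => w i j * (g j)⁻¹) = b),
      Finset.filter_subset _ _, by omega, ?_⟩
    intro i j hj
    rw [Finset.mem_filter] at hj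
    have hgj := hg j hj.1
    have := congrFun hj.2 i
    have hdiv : w i j / g j = b i := by rw [div_eq_mul_inv]; exact this
    exact (div_eq_iff hgj).mp hdiv

lemma chainStep {q n k t : ℕ} (hq : Fintype.card F = q)
    (C : Submodule F (Fin n → F)) (c : Fin k → Fin n → F) (hc : ∀ i, c i ∈ C)
    (d : ℕ → ℕ) (S : ℕ → Finset (Fin n))
    (hSmono : ∀ s, S s ⊆ S (s + 1))
    (hScard : ∀ m, m ≤ k → (S m).card = d m)
    (hT : ∀ s (h : s < k), ∀ j ∈ S (s + 1) \ S s, c ⟨s, h⟩ j ≠ 0)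
    (hcs : ∀ s (h : s < k), ∀ j, c ⟨s, h⟩ j ≠ 0 → j ∈ S (s + 1)) :
    ∀ m s, s + m = k → ∀ w : Fin t → Fin n → F,
      ∃ u : Fin t → Fin n → F, (∀ i, u i ∈ C) ∧
      ∃ Z : Finset (Fin n), (∀ j ∈ Z, j ∉ S s) ∧
        (∑ r ∈ Finset.Icc (s + 1) k, (d r - d (r - 1) + q ^ t - 1) / q ^ t) ≤ Z.card ∧
        ∀ i, ∀ j ∈ Z, w i j = u i j := by
  intro m
  induction m with
  | zero =>
    intro s hs w
    refine ⟨0, fun i => zero_mem _, ∅, by simp, ?_, by simp⟩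
    have : Finset.Icc (s + 1) k = ∅ := Finset.Icc_eq_empty (by omega)
    simp [this]
  | succ m ih =>
    intro s hs w
    have hsk : s < k := by omega
    obtain ⟨u', hu', Z', hZ'S, hZ'card, hZ'eq⟩ := ih (s + 1) (by omega) w
    obtain ⟨b, Z0, hZ0T, hZ0card, hZ0eq⟩ :=
      pigeonAux hq (S (s + 1) \ S s) (c ⟨s, hsk⟩) (hT s hsk) (fun i => w i - u' i)
    have hZ0in : ∀ j ∈ Z0, j ∈ S (s + 1) ∧ j ∉ S s := by
      intro j hj
      have := hZ0T hj
      rw [Finset.mem_sdiff] at this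
      exact this
    have hdisj : Disjoint Z' Z0 := by
      rw [Finset.disjoint_left]
      intro j hj hj0
      exact hZ'S j hj (hZ0in j hj0).1
    refine ⟨fun i => u' i + b i • c ⟨s, hsk⟩,
      fun i => C.add_mem (hu' i) (C.smul_mem _ (hc _)), Z' ∪ Z0, ?_, ?_, ?_⟩
    · intro j hj
      rcases Finset.mem_union.mp hj with h | h
      · exact fun hjs => hZ'S j h (hSmono s hjs)
      · exact (hZ0in j h).2
    · rw [Finset.card_union_of_disjoint hdisj]
      have hsplit : Finset.Icc (s + 1) k = insert (s + 1) (Finset.Icc (s + 2) k) := by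
        ext x; simp only [Finset.mem_Icc, Finset.mem_insert]; omega
      rw [hsplit, Finset.sum_insert (by simp)]
      have hTcard : (S (s + 1) \ S s).card = d (s + 1) - d s := by
        rw [Finset.card_sdiff_of_subset (hSmono s), hScard (s + 1) (by omega), hScard s (by omega)]
      have h1 : (d (s + 1) - d (s + 1 - 1) + q ^ t - 1) / q ^ t ≤ Z0.card := by
        have : s + 1 - 1 = s := by omega
        rw [this, ← hTcard]
        exact hZ0card
      have h2 : (∑ r ∈ Finset.Icc (s + 2) k, (d r - d (r - 1) + q ^ t - 1) / q ^ t)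
          ≤ Z'.card := by
        simpa using hZ'card
      omega
    · intro i j hj
      rcases Finset.mem_union.mp hj with h | h
      · have hc0 : c ⟨s, hsk⟩ j = 0 := by
          by_contra hne
          exact hZ'S j h (hcs s hsk j hne)
        simp only [Pi.add_apply, Pi.smul_apply, smul_eq_mul, hc0, mul_zero, add_zero]
        exact hZ'eq i j h
      · have := hZ0eq i j h
        simp only [Pi.sub_apply] at this
        simp only [Pi.add_apply, Pi.smul_apply, smul_eq_mul]
        linear_combination this

end Aux

/-- The `t`-th generalized covering radius of a linear code `C ⊆ F^n`:
the minimal `r` such that any `t` vectors can be simultaneously covered by `t`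
codewords on a common coordinate set `I` of size `r`. -/
noncomputable def genCovRad {F : Type*} [Field F] {n : ℕ} (C : Submodule F (Fin n → F))
    (t : ℕ) : ℕ :=
  sInf { r | ∀ v : Fin t → (Fin n → F), ∃ c : Fin t → (Fin n → F),
    (∀ i, c i ∈ C) ∧ ∃ I : Finset (Fin n), I.card = r ∧
      ∀ i j, (v i - c i) j ≠ 0 → j ∈ I }

/-- The `r`-th generalized Hamming weight of a linear code: the minimal support size
of an `r`-dimensional subcode. -/
noncomputable def GHW (F : Type*) [Field F] {ι : Type*} (C : Submodule F (ι → F))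
    (r : ℕ) : ℕ :=
  sInf { w | ∃ D : Submodule F (ι → F), D ≤ C ∧ Module.finrank F D = r ∧
    { i | ∃ x ∈ D, x i ≠ 0 }.ncard = w }

/-- For a chained `[n,k]` code over `F_q` with GHW hierarchy `d 1 < ⋯ < d k` (and `d 0 = 0`),
the `t`-th generalized covering radius is at most
`n − Σ_{r=1}^{k} ⌈(d r − d (r−1))/q^t⌉`; equivalently, any `t` vectors are covered by `t`
codewords on a common coordinate set of at most that size. -/
theorem stmt0 {F : Type*} [Field F] [Fintype F] {q n k t : ℕ}
    (hq : Fintype.card F = q) (ht : 1 ≤ t)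
    (C : Submodule F (Fin n → F)) (hdim : Module.finrank F C = k)
    (d : ℕ → ℕ) (hd0 : d 0 = 0)
    (hGHW : ∀ r, 1 ≤ r → r ≤ k → d r = GHW F C r)
    (hmono : ∀ r, 1 ≤ r → r < k → d r < d (r + 1))
    (hchain : ∃ c : Fin k → (Fin n → F), LinearIndependent F c ∧ (∀ i, c i ∈ C) ∧
      ∀ r : Fin k, { i | ∃ j ≤ r, c j i ≠ 0 }.ncard = d (r.1 + 1)) :
    genCovRad C t ≤ n - ∑ r ∈ Finset.Icc 1 k, (d r - d (r - 1) + q ^ t - 1) / q ^ t ∧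
    ∀ v : Fin t → (Fin n → F), ∃ c : Fin t → (Fin n → F),
      (∀ i, c i ∈ C) ∧ ∃ I : Finset (Fin n),
        I.card ≤ n - ∑ r ∈ Finset.Icc 1 k, (d r - d (r - 1) + q ^ t - 1) / q ^ t ∧
        ∀ i j, (v i - c i) j ≠ 0 → j ∈ I := by
  classical
  obtain ⟨c, hind, hmem, hsupp⟩ := hchain
  set SB : ℕ := ∑ r ∈ Finset.Icc 1 k, (d r - d (r - 1) + q ^ t - 1) / q ^ t with hSBdef
  set S : ℕ → Finset (Fin n) :=
    fun m => Finset.univ.filter (fun i => ∃ j : Fin k, (j : ℕ) < m ∧ c j i ≠ 0) with hS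
  have hSmem : ∀ m i, i ∈ S m ↔ ∃ j : Fin k, (j : ℕ) < m ∧ c j i ≠ 0 := by
    intro m i; simp [hS]
  have hSmono : ∀ s, S s ⊆ S (s + 1) := by
    intro s i hi
    rw [hSmem] at hi ⊢
    obtain ⟨j, hj1, hj2⟩ := hi
    exact ⟨j, by omega, hj2⟩
  have hScard : ∀ m, m ≤ k → (S m).card = d m := by
    intro m hm
    match m with
    | 0 =>
      rw [hd0]
      rw [Finset.card_eq_zero]
      ext i
      simp [hSmem]
    | Nat.succ r =>
      have hr : r < k := by omega
      have hset : ((S (r + 1) : Finset (Fin n)) : Set (Fin n))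
          = { i | ∃ j ≤ (⟨r, hr⟩ : Fin k), c j i ≠ 0 } := by
        ext i
        simp only [Finset.coe_filter, Set.mem_setOf_eq, hSmem, Finset.mem_coe]
        constructor
        · rintro ⟨j, hj1, hj2⟩
          exact ⟨j, by rw [Fin.le_def]; simpa using Nat.lt_succ_iff.mp hj1, hj2⟩
        · rintro ⟨j, hj1, hj2⟩
          rw [Fin.le_def] at hj1
          exact ⟨j, by simpa using Nat.lt_succ_iff.mpr hj1, hj2⟩
      rw [← Set.ncard_coe_finset, hset, hsupp ⟨r, hr⟩]
  have hT : ∀ s (h : s < k), ∀ j ∈ S (s + 1) \ S s, c ⟨s, h⟩ j ≠ 0 := by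
    intro s h j hj
    rw [Finset.mem_sdiff, hSmem, hSmem] at hj
    obtain ⟨⟨j', hj'1, hj'2⟩, hnot⟩ := hj
    have : (j' : ℕ) = s := by
      by_contra hne
      exact hnot ⟨j', by omega, hj'2⟩
    have : j' = ⟨s, h⟩ := Fin.ext this
    rwa [← this]
  have hcs : ∀ s (h : s < k), ∀ j, c ⟨s, h⟩ j ≠ 0 → j ∈ S (s + 1) := by
    intro s h j hj
    rw [hSmem]
    exact ⟨⟨s, h⟩, by simp, hj⟩
  have key : ∀ v : Fin t → (Fin n → F), ∃ cw : Fin t → (Fin n → F),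
      (∀ i, cw i ∈ C) ∧ ∃ I : Finset (Fin n), I.card = n - SB ∧
        ∀ i j, (v i - cw i) j ≠ 0 → j ∈ I := by
    intro v
    obtain ⟨u, hu, Z, hZS, hZcard, hZeq⟩ :=
      chainStep hq C c hmem d S hSmono hScard hT hcs k 0 (by omega) v
    have hZcard' : SB ≤ Z.card := by
      rw [hSBdef]
      simpa using hZcard
    have hZn : Z.card ≤ n := by
      have := Finset.card_le_univ Z
      simpa using this
    have hcompl : Zᶜ.card ≤ n - SB := by
      rw [Finset.card_compl, Fintype.card_fin]
      omega
    obtain ⟨I, hZI, hIcard⟩ := Finset.exists_superset_card_eq hcompl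
      (by rw [Fintype.card_fin]; omega)
    refine ⟨u, hu, I, hIcard, ?_⟩
    intro i j hj
    apply hZI
    rw [Finset.mem_compl]
    intro hjZ
    apply hj
    rw [Pi.sub_apply, hZeq i j hjZ, sub_self]
  constructor
  · exact Nat.sInf_le key
  · intro v
    obtain ⟨cw, h1, I, h2, h3⟩ := key v
    exact ⟨cw, h1, I, le_of_eq h2, h3⟩
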